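/- The decoherence-free subalgebra N(T) = {x ∈ B(H) : T_t(x*x) = T_t(x)*T_t(x) and T_t(xx*) = T_t(x)T_t(x)* for all t ≥ 0} of a quantum Markov semigroup is a von Neumann subalgebra of B(H): it is a *-subalgebra containing the identity and closed in the σ-strong topology, and it is invariant under every T_t. -/

import Mathlib

open Filter

/-- Complete positivity of a linear map on `B(H)`. -/
def IsCompletelyPositive {H : Type} [NormedAddCommGroup H] [InnerProductSpace ℂ H]
    [CompleteSpace H] (T : (H →L[ℂ] H) →ₗ[ℂ] (H →L[ℂ] H)) : Prop :=
  ∀ (n : ℕ) (a b : Fin n → (H →L[ℂ] H)),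
    (∑ i, ∑ j, star (b i) * T (star (a i) * a j) * b j).IsPositive

/-- The decoherence-free subalgebra of a semigroup `T`. -/
def DFSubalgebra {H : Type} [NormedAddCommGroup H] [InnerProductSpace ℂ H]
    [CompleteSpace H] (T : ℝ → (H →L[ℂ] H) →ₗ[ℂ] (H →L[ℂ] H)) :
    Set (H →L[ℂ] H) :=
  {x | ∀ t, 0 ≤ t →
    T t (star x * x) = star (T t x) * T t x ∧
    T t (x * star x) = T t x * star (T t x)}

section Aux

open ComplexConjugate

variable {H : Type} [NormedAddCommGroup H] [InnerProductSpace ℂ H] [CompleteSpace H]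

local notation "⟪" x ", " y "⟫" => @inner ℂ _ _ x y

/-- Kadison–Schwarz operator inequality, from 2-positivity and unitality. -/
lemma ks_aux (T : (H →L[ℂ] H) →ₗ[ℂ] (H →L[ℂ] H)) (hCP : IsCompletelyPositive T)
    (hu : T 1 = 1) (hr : ∀ a, T (star a) = star (T a)) (z : H →L[ℂ] H) :
    (T (star z * z) - star (T z) * T z).IsPositive := by
  have h := hCP 2 ![z, 1] ![1, -(T z)]
  have e : (∑ i, ∑ j, star ((![1, -(T z)] : Fin 2 → _) i) *
      T (star ((![z, 1] : Fin 2 → _) i) * (![z, 1] : Fin 2 → _) j) *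
      (![1, -(T z)] : Fin 2 → _) j) = T (star z * z) - star (T z) * T z := by
    simp [Fin.sum_univ_two, hu, hr]
    abel
  rwa [e] at h

/-- The multiplicative-domain lemma: if `T (x* x) = (T x)* (T x)` then
`T (x* y) = (T x)* (T y)` for every `y`. -/
lemma multdom_aux (T : (H →L[ℂ] H) →ₗ[ℂ] (H →L[ℂ] H))
    (hpos : ∀ z, (T (star z * z) - star (T z) * T z).IsPositive)
    (hr : ∀ a, T (star a) = star (T a))
    {x : H →L[ℂ] H} (hx : T (star x * x) = star (T x) * T x)
    (y : H →L[ℂ] H) : T (star x * y) = star (T x) * T y := by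
  set A := T (star x * y) - star (T x) * T y with hA
  set B := T (star y * x) - star (T y) * T x with hB
  set E := T (star y * y) - star (T y) * T y with hE
  have key : ∀ c : ℂ, (c • A + (conj c) • B + ((conj c) * c) • E).IsPositive := by
    intro c
    have h := hpos (x + c • y)
    have heq : T (star (x + c • y) * (x + c • y)) - star (T (x + c • y)) * T (x + c • y)
        = c • A + (conj c) • B + ((conj c) * c) • E := by
      rw [hA, hB, hE]
      simp only [star_add, star_smul, Complex.star_def, add_mul, mul_add, smul_mul_assoc,
        mul_smul_comm, map_add, map_smul, smul_smul, hx]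
      module
    rwa [heq] at h
  have hBA : star A = B := by
    have h1 : star (T (star x * y)) = T (star y * x) := by
      rw [← hr]; congr 1; simp [star_mul]
    have h2 : star (star (T x) * T y) = star (T y) * T x := by simp [star_mul]
    rw [hA, hB, star_sub, h1, h2]
  have hzero : ∀ ξ : H, ⟪A ξ, ξ⟫ = 0 := by
    intro ξ
    by_contra hne
    set d : ℂ := ⟪A ξ, ξ⟫ with hd
    set e : ℂ := ⟪E ξ, ξ⟫ with he
    have he0 : 0 ≤ e.re := (hpos y).2 ξ
    set r : ℝ := Complex.normSq d with hrr
    set t : ℝ := 1 / (e.re + 1) with ht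
    have htpos : 0 < t := by positivity
    have hrpos : 0 < r := Complex.normSq_pos.mpr hne
    have hte : t * e.re < 1 := by
      rw [ht, div_mul_eq_mul_div, div_lt_one (by linarith)]; linarith
    set c : ℂ := -(t : ℂ) * d with hc
    have hBinner : ⟪B ξ, ξ⟫ = conj d := by
      rw [← hBA, ContinuousLinearMap.star_eq_adjoint, ContinuousLinearMap.adjoint_inner_left,
        ← inner_conj_symm]
    have h := (key c).2 ξ
    have hrw : ((c • A + (conj c) • B + ((conj c) * c) • E) ξ) =
        c • (A ξ) + (conj c) • (B ξ) + ((conj c) * c) • (E ξ) := by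
      simp
    have hval : ⟪(c • A + (conj c) • B + ((conj c) * c) • E) ξ, ξ⟫
        = Complex.ofReal (-(2 * t * r)) + Complex.ofReal (t ^ 2 * r) * e := by
      rw [hrw, inner_add_left, inner_add_left, inner_smul_left, inner_smul_left,
        inner_smul_left, hBinner, ← hd, ← he, hc]
      have h1 : d * conj d = (r : ℂ) := by rw [hrr]; exact_mod_cast Complex.mul_conj d
      simp only [map_mul, map_neg, Complex.conj_ofReal, Complex.conj_conj]
      push_cast
      linear_combination ((-2 * (t : ℂ)) + (t : ℂ) ^ 2 * e) * h1
    have h' : 0 ≤ (-(2 * t * r)) + (t ^ 2 * r) * e.re := by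
      have := h
      rw [ContinuousLinearMap.reApplyInnerSelf] at this
      rw [show (inner ℂ ((c • A + (conj c) • B + ((conj c) * c) • E) ξ) ξ : ℂ)
          = Complex.ofReal (-(2 * t * r)) + Complex.ofReal (t ^ 2 * r) * e from hval] at this
      have hre : ((Complex.ofReal (-(2 * t * r)) + Complex.ofReal (t ^ 2 * r) * e)).re
          = -(2 * t * r) + (t ^ 2 * r) * e.re := by
        rw [Complex.add_re, Complex.ofReal_re, Complex.re_ofReal_mul]
      rw [RCLike.re_to_complex, hre] at this
      linarith
    nlinarith [mul_pos htpos hrpos, mul_lt_mul_of_pos_right hte (mul_pos htpos hrpos)]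
  have hA0 : A = 0 := by
    have := (inner_map_self_eq_zero (A : H →ₗ[ℂ] H)).mp (fun ξ => hzero ξ)
    exact ContinuousLinearMap.ext fun ξ => by simpa using LinearMap.congr_fun this ξ
  rw [hA, sub_eq_zero] at hA0
  exact hA0

end Aux

/-- the decoherence-free subalgebra `N(T)` of a quantum Markov
semigroup is a von Neumann subalgebra of `B(H)`: a *-subalgebra containing the
identity, closed under (bounded, strong) σ-strong limits, and invariant under
every `T_t`. -/
theorem df_subalgebra_is_vonNeumann
    {H : Type} [NormedAddCommGroup H] [InnerProductSpace ℂ H] [CompleteSpace H]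
    (T : ℝ → (H →L[ℂ] H) →ₗ[ℂ] (H →L[ℂ] H))
    (hCP : ∀ t, 0 ≤ t → IsCompletelyPositive (T t))
    (hunital : ∀ t, 0 ≤ t → T t 1 = 1)
    (hreal : ∀ t, 0 ≤ t → ∀ a, T t (star a) = star (T t a))
    (hzero : T 0 = LinearMap.id)
    (hsemi : ∀ t s, 0 ≤ t → 0 ≤ s → ∀ x, T (t + s) x = T t (T s x))
    -- normality of each `T_t`, expressed as σ-strong (= strong on bounded sets)
    -- sequential continuity
    (hnormal : ∀ t, 0 ≤ t → ∀ (x : ℕ → H →L[ℂ] H) (y : H →L[ℂ] H),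
      (∃ C, ∀ n, ‖x n‖ ≤ C) →
      (∀ ξ : H, Tendsto (fun n => x n ξ) atTop (nhds (y ξ))) →
      ∀ ξ : H, Tendsto (fun n => T t (x n) ξ) atTop (nhds (T t y ξ))) :
    (1 : H →L[ℂ] H) ∈ DFSubalgebra T ∧
    (∀ x ∈ DFSubalgebra T, ∀ y ∈ DFSubalgebra T, x + y ∈ DFSubalgebra T) ∧
    (∀ x ∈ DFSubalgebra T, ∀ c : ℂ, c • x ∈ DFSubalgebra T) ∧
    (∀ x ∈ DFSubalgebra T, ∀ y ∈ DFSubalgebra T, x * y ∈ DFSubalgebra T) ∧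
    (∀ x ∈ DFSubalgebra T, star x ∈ DFSubalgebra T) ∧
    (∀ t, 0 ≤ t → ∀ x ∈ DFSubalgebra T, T t x ∈ DFSubalgebra T) ∧
    (∀ (x : ℕ → H →L[ℂ] H) (y : H →L[ℂ] H),
      (∀ n, x n ∈ DFSubalgebra T) →
      (∃ C, ∀ n, ‖x n‖ ≤ C) →
      (∀ ξ : H, Tendsto (fun n => x n ξ) atTop (nhds (y ξ))) →
      y ∈ DFSubalgebra T) := by
  -- the four multiplicative-domain identities, for every element of `N(T)`
  have key : ∀ t, 0 ≤ t → ∀ x ∈ DFSubalgebra T, ∀ w : H →L[ℂ] H,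
      (T t (star x * w) = star (T t x) * T t w) ∧
      (T t (x * w) = T t x * T t w) ∧
      (T t (w * x) = T t w * T t x) ∧
      (T t (w * star x) = T t w * star (T t x)) := by
    intro t ht x hx w
    have hr := hreal t ht
    have hpos := fun z => ks_aux (T t) (hCP t ht) (hunital t ht) hr z
    have hc := hx t ht
    have h1 : ∀ w, T t (star x * w) = star (T t x) * T t w :=
      multdom_aux (T t) hpos hr hc.1
    have h2 : ∀ w, T t (x * w) = T t x * T t w := by
      intro w
      have hx2 : T t (star (star x) * star x) = star (T t (star x)) * T t (star x) := by
        simp only [star_star, hr]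
        exact hc.2
      have h := multdom_aux (T t) hpos hr hx2 w
      simpa [star_star, hr] using h
    have h3 : ∀ w, T t (w * x) = T t w * T t x := by
      intro w
      have h := h1 (star w)
      rw [show star x * star w = star (w * x) by rw [star_mul]] at h
      rw [hr, hr] at h
      have := congrArg star h
      simpa [star_mul, star_star] using this
    have h4 : ∀ w, T t (w * star x) = T t w * star (T t x) := by
      intro w
      have h := h2 (star w)
      rw [show x * star w = star (w * star x) by simp [star_mul, star_star]] at h
      rw [hr, hr] at h
      have := congrArg star h
      simpa [star_mul, star_star] using this
    exact ⟨h1 w, h2 w, h3 w, h4 w⟩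
  refine ⟨?_, ?_, ?_, ?_, ?_, ?_, ?_⟩
  · -- identity
    intro t ht
    constructor <;> simp [hunital t ht]
  · -- sums
    intro x hx y hy t ht
    have Kx := key t ht x hx
    have Ky := key t ht y hy
    constructor
    · simp only [star_add, add_mul, mul_add, map_add]
      rw [(Kx x).1, (Kx y).1, (Ky x).1, (Ky y).1]
    · simp only [star_add, add_mul, mul_add, map_add]
      rw [(Kx x).2.2.2, (Ky x).2.2.2, (Kx y).2.2.2, (Ky y).2.2.2]
  · -- scalar multiples
    intro x hx c t ht
    have hc := hx t ht
    constructor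
    · simp only [star_smul, Complex.star_def, smul_mul_assoc, mul_smul_comm, map_smul,
        smul_smul, hc.1]
    · simp only [star_smul, Complex.star_def, smul_mul_assoc, mul_smul_comm, map_smul,
        smul_smul, hc.2]
  · -- products
    intro x hx y hy t ht
    have Kx := key t ht x hx
    have Ky := key t ht y hy
    constructor
    · have e : star (x * y) * (x * y) = star y * (star x * (x * y)) := by
        simp [star_mul, mul_assoc]
      rw [e, (Ky (star x * (x * y))).1, (Kx (x * y)).1, (Kx y).2.1]
      simp [star_mul, mul_assoc]
    · have e : (x * y) * star (x * y) = x * (y * (star y * star x)) := by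
        simp [star_mul, mul_assoc]
      rw [e, (Kx (y * (star y * star x))).2.1, (Ky (star y * star x)).2.1,
        (Ky (star x)).1, hreal t ht, (Kx y).2.1]
      simp [star_mul, mul_assoc]
  · -- star
    intro x hx t ht
    have hr := hreal t ht
    have hc := hx t ht
    constructor
    · simp only [star_star, hr]
      exact hc.2
    · simp only [star_star, hr]
      exact hc.1
  · -- invariance under the semigroup
    intro t ht x hx s hs
    have hst : (0:ℝ) ≤ s + t := by linarith
    constructor
    · rw [show star (T t x) * T t x = T t (star x * x) from ((hx t ht).1).symm,
        ← hsemi s t hs ht, ← hsemi s t hs ht, (hx (s + t) hst).1]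
    · rw [show T t x * star (T t x) = T t (x * star x) from ((hx t ht).2).symm,
        ← hsemi s t hs ht, ← hsemi s t hs ht, (hx (s + t) hst).2]
  · -- σ-strong closedness
    intro x y hxn hbound hconv t ht
    have hr := hreal t ht
    have hTconv : ∀ ξ : H, Tendsto (fun n => T t (x n) ξ) atTop (nhds (T t y ξ)) :=
      hnormal t ht x y hbound hconv
    obtain ⟨C, hC⟩ := hbound
    constructor
    · -- T t (y* y) = (T t y)* (T t y)
      ext ξ
      have hb : ∀ n, ‖star y * x n‖ ≤ ‖y‖ * C := by
        intro n
        calc ‖star y * x n‖ ≤ ‖star y‖ * ‖x n‖ := norm_mul_le _ _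
          _ ≤ ‖y‖ * C := by
              rw [norm_star]
              exact mul_le_mul_of_nonneg_left (hC n) (norm_nonneg y)
      have hcv : ∀ ξ' : H, Tendsto (fun n => (star y * x n) ξ') atTop
          (nhds ((star y * y) ξ')) := by
        intro ξ'
        have := ((star y).continuous.tendsto (y ξ')).comp (hconv ξ')
        simpa [Function.comp_def] using this
      have h1 := hnormal t ht (fun n => star y * x n) (star y * y) ⟨‖y‖ * C, hb⟩ hcv ξ
      have h2 : ∀ n, T t (star y * x n) = star (T t y) * T t (x n) := by
        intro n
        rw [(key t ht (x n) (hxn n) (star y)).2.2.1, hr]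
      simp only [h2] at h1
      have h3 : Tendsto (fun n => (star (T t y) * T t (x n)) ξ) atTop
          (nhds ((star (T t y) * T t y) ξ)) := by
        have := ((star (T t y)).continuous.tendsto (T t y ξ)).comp (hTconv ξ)
        simpa [Function.comp_def] using this
      exact tendsto_nhds_unique h1 h3
    · -- T t (y y*) = (T t y)(T t y)*
      ext ξ
      have hb : ∀ n, ‖x n * star y‖ ≤ C * ‖y‖ := by
        intro n
        calc ‖x n * star y‖ ≤ ‖x n‖ * ‖star y‖ := norm_mul_le _ _
          _ ≤ C * ‖y‖ := by
              rw [norm_star]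
              exact mul_le_mul_of_nonneg_right (hC n) (norm_nonneg y)
      have hcv : ∀ ξ' : H, Tendsto (fun n => (x n * star y) ξ') atTop
          (nhds ((y * star y) ξ')) := by
        intro ξ'
        simpa using hconv ((star y) ξ')
      have h1 := hnormal t ht (fun n => x n * star y) (y * star y) ⟨C * ‖y‖, hb⟩ hcv ξ
      have h2 : ∀ n, T t (x n * star y) = T t (x n) * star (T t y) := by
        intro n
        rw [(key t ht (x n) (hxn n) (star y)).2.1, hr]
      simp only [h2] at h1
      have h3 : Tendsto (fun n => (T t (x n) * star (T t y)) ξ) atTop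
          (nhds ((T t y * star (T t y)) ξ)) := by
        simpa using hTconv ((star (T t y)) ξ)
      exact tendsto_nhds_unique h1 h3
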